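/- Let P ⊆ ℤⁿ be a finitely generated submonoid generating ℤⁿ, σ∨ the cone it generates, σ the dual cone, and ρ an extremal ray of σ. If the face ρ̂ = ρ⊥ ∩ σ∨ of σ∨ is almost saturated (i.e., contains a point w ∈ P with (w + σ∨) ∩ ℤⁿ ⊆ P), then there exists a Demazure root e for ρ with (P + e) ∩ P_sat ⊆ P; in particular the derivation δ_e of K[P] given by δ_e(χ^m) = ⟨m, n_ρ⟩χ^{m+e} is a well-defined nonzero locally nilpotent derivation. -/

import Mathlib

/-- The standard pairing between the lattices `M = ℤⁿ` and `N = ℤⁿ`. -/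
def pairZ {n : ℕ} (x y : Fin n → ℤ) : ℤ := ∑ i, x i * y i

/-- The rational polyhedral cone generated by finitely many rational vectors. -/
def coneOf {n k : ℕ} (v : Fin k → (Fin n → ℚ)) : Set (Fin n → ℚ) :=
  {x | ∃ q : Fin k → ℚ, (∀ i, 0 ≤ q i) ∧ x = ∑ i, q i • v i}

/-- Rational cast of an integer vector. -/
def qcast {n : ℕ} (v : Fin n → ℤ) : Fin n → ℚ := fun i => ((v i : ℤ) : ℚ)


def dotQ {N : ℕ} (x y : Fin N → ℚ) : ℚ := ∑ i, x i * y i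

lemma dotQ_comm {N : ℕ} (x y : Fin N → ℚ) : dotQ x y = dotQ y x := by
  simp [dotQ, mul_comm]

lemma dotQ_add_left {N : ℕ} (x y z : Fin N → ℚ) :
    dotQ (x + y) z = dotQ x z + dotQ y z := by
  simp [dotQ, add_mul, Finset.sum_add_distrib]

lemma dotQ_sub_left {N : ℕ} (x y z : Fin N → ℚ) :
    dotQ (x - y) z = dotQ x z - dotQ y z := by
  simp [dotQ, sub_mul, Finset.sum_sub_distrib]

lemma dotQ_smul_left {N : ℕ} (q : ℚ) (x z : Fin N → ℚ) :
    dotQ (q • x) z = q * dotQ x z := by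
  simp [dotQ, Finset.mul_sum, mul_assoc]

lemma dotQ_smul_right {N : ℕ} (q : ℚ) (x z : Fin N → ℚ) :
    dotQ x (q • z) = q * dotQ x z := by
  rw [dotQ_comm, dotQ_smul_left, dotQ_comm]

lemma dotQ_sub_right {N : ℕ} (x y z : Fin N → ℚ) :
    dotQ z (x - y) = dotQ z x - dotQ z y := by
  rw [dotQ_comm, dotQ_sub_left, dotQ_comm x z, dotQ_comm y z]

lemma dotQ_neg_right {N : ℕ} (x y : Fin N → ℚ) : dotQ x (-y) = - dotQ x y := by
  simp [dotQ, Finset.sum_neg_distrib]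

lemma dotQ_self_pos {N : ℕ} {x : Fin N → ℚ} (hx : x ≠ 0) : 0 < dotQ x x := by
  have h : ∃ i, x i ≠ 0 := by
    by_contra h
    push_neg at h
    exact hx (funext h)
  obtain ⟨i, hi⟩ := h
  have : 0 < x i * x i := mul_self_pos.mpr hi
  exact Finset.sum_pos' (fun j _ => mul_self_nonneg _) ⟨i, Finset.mem_univ i, this⟩

theorem farkasQ {N : ℕ} {ι : Type} [DecidableEq ι] (s : Finset ι) :
    ∀ (a : ι → (Fin N → ℚ)) (b : Fin N → ℚ),
      (∃ c : ι → ℚ, (∀ i, 0 ≤ c i) ∧ (∀ i, i ∉ s → c i = 0) ∧ b = ∑ i ∈ s, c i • a i) ∨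
      (∃ v, (∀ i ∈ s, 0 ≤ dotQ (a i) v) ∧ dotQ b v < 0) := by
  induction s using Finset.induction_on with
  | empty =>
    intro a b
    by_cases hb : b = 0
    · exact Or.inl ⟨0, fun i => le_refl 0, fun i _ => rfl, by simp [hb]⟩
    · refine Or.inr ⟨-b, by simp, ?_⟩
      rw [dotQ_neg_right]
      simpa using dotQ_self_pos hb
  | @insert j₀ s hj₀ ih =>
    intro a b
    rcases ih a b with ⟨c, hc0, hcs, hcb⟩ | ⟨v, hv0, hvb⟩
    · refine Or.inl ⟨c, hc0, fun i hi => hcs i (fun h => hi (Finset.mem_insert_of_mem h)), ?_⟩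
      rw [Finset.sum_insert hj₀, hcs j₀ hj₀, zero_smul, zero_add]
      exact hcb
    · by_cases hd : 0 ≤ dotQ (a j₀) v
      · refine Or.inr ⟨v, ?_, hvb⟩
        intro i hi
        rcases Finset.mem_insert.mp hi with h | h
        · subst h; exact hd
        · exact hv0 i h
      · push_neg at hd
        set d := dotQ (a j₀) v with hdv
        have hdne : d ≠ 0 := ne_of_lt hd
        -- project
        set b' := b - (dotQ b v / d) • a j₀ with hb'
        set a' := fun i => a i - (dotQ (a i) v / d) • a j₀ with ha'
        rcases ih a' b' with ⟨c, hc0, hcs, hcb⟩ | ⟨w, hw0, hwb⟩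
        · -- b = ∑ c i • a i + q • a j₀
          set q := (dotQ b v - ∑ i ∈ s, c i * dotQ (a i) v) / d with hq
          have hqpos : 0 ≤ q := by
            apply le_of_lt
            apply div_pos_of_neg_of_neg _ hd
            have hsum : 0 ≤ ∑ i ∈ s, c i * dotQ (a i) v :=
              Finset.sum_nonneg (fun i hi => mul_nonneg (hc0 i) (hv0 i hi))
            linarith
          refine Or.inl ⟨Function.update c j₀ q, ?_, ?_, ?_⟩
          · intro i
            by_cases h : i = j₀
            · subst h; rw [Function.update_self]; exact hqpos
            · rw [Function.update_of_ne h]; exact hc0 i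
          · intro i hi
            have h1 : i ≠ j₀ := by rintro rfl; exact hi (Finset.mem_insert_self _ s)
            have h2 : i ∉ s := fun h => hi (Finset.mem_insert_of_mem h)
            rw [Function.update_of_ne h1]; exact hcs i h2
          · have hrw : ∀ i ∈ s, Function.update c j₀ q i • a i = c i • a i := by
              intro i hi
              rw [Function.update_of_ne (by rintro rfl; exact hj₀ hi)]
            rw [Finset.sum_insert hj₀, Function.update_self, Finset.sum_congr rfl hrw]
            have h1 : ∑ i ∈ s, c i • a' i =
                (∑ i ∈ s, c i • a i) - ((∑ i ∈ s, c i * dotQ (a i) v) / d) • a j₀ := by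
              rw [ha']
              simp only [smul_sub, smul_smul]
              rw [Finset.sum_sub_distrib, ← Finset.sum_smul, Finset.sum_div]
              congr 2
              exact Finset.sum_congr rfl fun i _ => by ring
            have h2 := hcb
            rw [hb', h1] at h2
            have h3 : b = ∑ i ∈ s, c i • a i - ((∑ i ∈ s, c i * dotQ (a i) v) / d) • a j₀
                + (dotQ b v / d) • a j₀ := by
              rw [← h2]; abel
            rw [h3, hq, sub_div, sub_smul]
            abel
        · -- new functional
          refine Or.inr ⟨w - (dotQ (a j₀) w / d) • v, ?_, ?_⟩
          · intro i hi
            rcases Finset.mem_insert.mp hi with h | h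
            · subst h
              rw [dotQ_sub_right, dotQ_smul_right, ← hdv]
              field_simp
              simp
            · have := hw0 i h
              rw [ha'] at this
              simp only [dotQ_sub_left, dotQ_smul_left] at this
              rw [dotQ_sub_right, dotQ_smul_right]
              have hsym : dotQ (a i) v = dotQ v (a i) := dotQ_comm _ _
              calc dotQ (a i) w - dotQ (a j₀) w / d * dotQ (a i) v
                  = dotQ (a i) w - dotQ (a i) v / d * dotQ (a j₀) w := by ring
                _ ≥ 0 := this
          · have := hwb
            rw [hb'] at this
            simp only [dotQ_sub_left, dotQ_smul_left] at this
            rw [dotQ_sub_right, dotQ_smul_right]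
            calc dotQ b w - dotQ (a j₀) w / d * dotQ b v
                = dotQ b w - dotQ b v / d * dotQ (a j₀) w := by ring
              _ < 0 := this

lemma dotQ_snoc_left {N : ℕ} (x : Fin N → ℚ) (α : ℚ) (y : Fin (N+1) → ℚ) :
    dotQ (Fin.snoc x α) y = dotQ x (Fin.init y) + α * y (Fin.last N) := by
  simp [dotQ, Fin.sum_univ_castSucc, Fin.init]

lemma sum_mem_coneOf {n k : ℕ} (v : Fin k → (Fin n → ℚ)) (t : Finset (Fin k))
    (c : Fin k → ℚ) (hc : ∀ i ∈ t, 0 ≤ c i) : (∑ j ∈ t, c j • v j) ∈ coneOf v := by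
  refine ⟨fun i => if i ∈ t then c i else 0, fun i => ?_, ?_⟩
  · by_cases h : i ∈ t
    · simpa [h] using hc i h
    · simp [h]
  · rw [← Finset.sum_subset (Finset.subset_univ t) (fun i _ hi => by simp [hi])]
    exact Finset.sum_congr rfl fun i hi => by simp [hi]

theorem facet_functional {n k : ℕ} (nρ : Fin k → (Fin n → ℤ)) (i₀ : Fin k)
    (hne : qcast (nρ i₀) ≠ 0)
    (hpointed : ∀ x : Fin n → ℚ, x ∈ coneOf (fun i => qcast (nρ i)) →
      -x ∈ coneOf (fun i => qcast (nρ i)) → x = 0)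
    (hdistinct : ∀ j, j ≠ i₀ → ∀ q : ℚ, qcast (nρ j) ≠ q • qcast (nρ i₀))
    (hextremal : ∀ x y : Fin n → ℚ, x ∈ coneOf (fun i => qcast (nρ i)) →
      y ∈ coneOf (fun i => qcast (nρ i)) →
      (∃ q : ℚ, 0 ≤ q ∧ x + y = q • qcast (nρ i₀)) →
      ∃ q : ℚ, 0 ≤ q ∧ x = q • qcast (nρ i₀)) :
    ∃ v : Fin n → ℚ, dotQ v (qcast (nρ i₀)) = 0 ∧
      ∀ j, j ≠ i₀ → 0 < dotQ v (qcast (nρ j)) := by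
  set nQ := qcast (nρ i₀) with hnQ
  set s0 := dotQ nQ nQ with hs0
  have hs0pos : 0 < s0 := dotQ_self_pos hne
  have hs0ne : s0 ≠ 0 := ne_of_gt hs0pos
  -- projection away from nQ
  set pr : (Fin n → ℚ) → (Fin n → ℚ) := fun x => x - (dotQ x nQ / s0) • nQ with hpr
  have hpr_dot : ∀ x y : Fin n → ℚ, dotQ (pr x) y = dotQ x y - dotQ x nQ / s0 * dotQ nQ y := by
    intro x y
    rw [hpr]
    simp only [dotQ_sub_left, dotQ_smul_left]
  have hpr_sym : ∀ x y : Fin n → ℚ, dotQ x (pr y) = dotQ (pr x) y := by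
    intro x y
    rw [dotQ_comm, hpr_dot, hpr_dot, dotQ_comm y x, dotQ_comm y nQ, dotQ_comm nQ x]
    ring
  set w : Fin k → (Fin n → ℚ) := fun j => pr (qcast (nρ j)) with hw
  rcases farkasQ (Finset.univ.erase i₀)
      (fun j => Fin.snoc (w j) (-1 : ℚ)) (Fin.snoc (0 : Fin n → ℚ) (-1 : ℚ)) with
    ⟨c, hc0, hcs, hcb⟩ | ⟨vh, hv0, hvb⟩
  · -- certificate: derive contradiction
    exfalso
    -- evaluate at last coordinate
    have hlast := congrFun hcb (Fin.last n)
    simp only [Fin.snoc_last, Finset.sum_apply, Pi.smul_apply, smul_eq_mul] at hlast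
    have hsum1 : ∑ j ∈ Finset.univ.erase i₀, c j = 1 := by
      have h2 : -(∑ j ∈ Finset.univ.erase i₀, c j) = -1 := by
        rw [hlast, ← Finset.sum_neg_distrib]
        exact Finset.sum_congr rfl fun j _ => by ring
      linarith
    -- evaluate at first coordinates
    have hfirst : ∑ j ∈ Finset.univ.erase i₀, c j • w j = 0 := by
      funext i
      have h := congrFun hcb (Fin.castSucc i)
      simp only [Fin.snoc_castSucc, Finset.sum_apply, Pi.smul_apply, smul_eq_mul,
        Pi.zero_apply] at h
      simp only [Finset.sum_apply, Pi.smul_apply, smul_eq_mul, Pi.zero_apply]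
      exact h.symm
    -- existence of a positive coefficient
    have hex : ∃ j₁ ∈ Finset.univ.erase i₀, c j₁ ≠ 0 := by
      by_contra h
      push_neg at h
      rw [Finset.sum_congr rfl (fun j hj => h j hj)] at hsum1
      simp at hsum1
    obtain ⟨j₁, hj₁mem, hj₁ne⟩ := hex
    have hj₁i₀ : j₁ ≠ i₀ := (Finset.mem_erase.mp hj₁mem).1
    have hcj₁pos : 0 < c j₁ := lt_of_le_of_ne (hc0 j₁) (Ne.symm hj₁ne)
    -- unfold w
    set tt := ∑ j ∈ Finset.univ.erase i₀, c j * (dotQ (qcast (nρ j)) nQ / s0) with htt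
    have hcomb : ∑ j ∈ Finset.univ.erase i₀, c j • qcast (nρ j) = tt • nQ := by
      have hrw : ∑ j ∈ Finset.univ.erase i₀, c j • w j
          = ∑ j ∈ Finset.univ.erase i₀, (c j • qcast (nρ j)
              - (c j * (dotQ (qcast (nρ j)) nQ / s0)) • nQ) := by
        refine Finset.sum_congr rfl fun j _ => ?_
        rw [hw, hpr]
        simp only [smul_sub, smul_smul]
      rw [hrw, Finset.sum_sub_distrib, ← Finset.sum_smul, ← htt] at hfirst
      exact sub_eq_zero.mp hfirst
    have hsplit : c j₁ • qcast (nρ j₁)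
        + ∑ j ∈ (Finset.univ.erase i₀).erase j₁, c j • qcast (nρ j) = tt • nQ := by
      exact (Finset.add_sum_erase _ (fun j => c j • qcast (nρ j)) hj₁mem).trans hcomb
    have mem1 : c j₁ • qcast (nρ j₁) ∈ coneOf (fun i => qcast (nρ i)) := by
      have := sum_mem_coneOf (fun i => qcast (nρ i)) {j₁} c (fun i _ => hc0 i)
      simpa using this
    have mem2 : (∑ j ∈ (Finset.univ.erase i₀).erase j₁, c j • qcast (nρ j))
        ∈ coneOf (fun i => qcast (nρ i)) :=
      sum_mem_coneOf (fun i => qcast (nρ i)) _ c (fun i _ => hc0 i)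
    by_cases htt0 : 0 ≤ tt
    · obtain ⟨q, hq0, hqeq⟩ := hextremal _ _ mem1 mem2 ⟨tt, htt0, hsplit⟩
      apply hdistinct j₁ hj₁i₀ (q / c j₁)
      have h2 : (c j₁)⁻¹ • (c j₁ • qcast (nρ j₁)) = (c j₁)⁻¹ • (q • nQ) := by rw [hqeq]
      rw [smul_smul, smul_smul, inv_mul_cancel₀ hj₁ne, one_smul] at h2
      rw [h2, div_eq_inv_mul]
    · push_neg at htt0
      have hneg : -(c j₁ • qcast (nρ j₁))
          = ∑ j ∈ (Finset.univ.erase i₀).erase j₁, c j • qcast (nρ j) + (-tt) • nQ := by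
        rw [neg_smul, ← hsplit]
        abel
      have hni : i₀ ∉ (Finset.univ.erase i₀).erase j₁ := by simp
      have memneg : -(c j₁ • qcast (nρ j₁)) ∈ coneOf (fun i => qcast (nρ i)) := by
        rw [hneg]
        have hrw2 : ∑ j ∈ (Finset.univ.erase i₀).erase j₁, c j • qcast (nρ j) + (-tt) • nQ
            = ∑ j ∈ insert i₀ ((Finset.univ.erase i₀).erase j₁),
                Function.update c i₀ (-tt) j • qcast (nρ j) := by
          rw [Finset.sum_insert hni, Function.update_self, add_comm]
          congr 1
          refine Finset.sum_congr rfl fun j hj => ?_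
          have : j ≠ i₀ := Finset.ne_of_mem_erase (Finset.mem_of_mem_erase hj)
          rw [Function.update_of_ne this]
        rw [hrw2]
        refine sum_mem_coneOf _ _ _ fun i hi => ?_
        rcases Finset.mem_insert.mp hi with h | h
        · subst h; rw [Function.update_self]; linarith
        · have : i ≠ i₀ := Finset.ne_of_mem_erase (Finset.mem_of_mem_erase h)
          rw [Function.update_of_ne this]
          exact hc0 i
      have hx := hpointed _ mem1 memneg
      rcases smul_eq_zero.mp hx with h | h
      · exact hj₁ne h
      · exact hdistinct j₁ hj₁i₀ 0 (by rw [h, zero_smul])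
  · -- got the functional
    have h0 : dotQ (0 : Fin n → ℚ) (Fin.init vh) = 0 := by simp [dotQ]
    rw [dotQ_snoc_left, h0, zero_add] at hvb
    have hlastpos : 0 < vh (Fin.last n) := by linarith
    refine ⟨pr (Fin.init vh), ?_, ?_⟩
    · rw [hpr_dot, ← hs0]
      field_simp
      simp
    · intro j hj
      have hmem : j ∈ Finset.univ.erase i₀ := Finset.mem_erase.mpr ⟨hj, Finset.mem_univ j⟩
      have h1 := hv0 j hmem
      rw [dotQ_snoc_left] at h1
      have h2 : 0 < dotQ (w j) (Fin.init vh) := by nlinarith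
      calc 0 < dotQ (w j) (Fin.init vh) := h2
        _ = dotQ (Fin.init vh) (w j) := dotQ_comm _ _
        _ = dotQ (pr (Fin.init vh)) (qcast (nρ j)) := by rw [hw, hpr_sym]

lemma pairZ_add {n : ℕ} (x y z : Fin n → ℤ) : pairZ (x + y) z = pairZ x z + pairZ y z := by
  simp [pairZ, add_mul, Finset.sum_add_distrib]

lemma pairZ_sub {n : ℕ} (x y z : Fin n → ℤ) : pairZ (x - y) z = pairZ x z - pairZ y z := by
  simp [pairZ, sub_mul, Finset.sum_sub_distrib]

lemma pairZ_smul {n : ℕ} (c : ℤ) (x z : Fin n → ℤ) : pairZ (c • x) z = c * pairZ x z := by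
  simp [pairZ, Finset.mul_sum, mul_assoc]

lemma pairZ_self_pos {n : ℕ} {x : Fin n → ℤ} (hx : x ≠ 0) : 0 < pairZ x x := by
  have h : ∃ i, x i ≠ 0 := by
    by_contra h
    push_neg at h
    exact hx (funext h)
  obtain ⟨i, hi⟩ := h
  exact Finset.sum_pos' (fun j _ => mul_self_nonneg _)
    ⟨i, Finset.mem_univ i, mul_self_pos.mpr hi⟩

lemma pairZ_qcast {n : ℕ} (x y : Fin n → ℤ) :
    ((pairZ x y : ℤ) : ℚ) = dotQ (qcast x) (qcast y) := by
  unfold pairZ dotQ qcast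
  push_cast
  rfl

lemma bezout_finset {ι : Type} [DecidableEq ι] (s : Finset ι) (f : ι → ℤ) :
    ∃ c : ι → ℤ, ∑ i ∈ s, c i * f i = s.gcd f := by
  induction s using Finset.induction_on with
  | empty => exact ⟨0, by simp⟩
  | @insert a s ha ih =>
    obtain ⟨c, hc⟩ := ih
    set A := Int.gcdA (f a) (s.gcd f) with hA
    set B := Int.gcdB (f a) (s.gcd f) with hB
    refine ⟨Function.update (fun i => c i * B) a A, ?_⟩
    rw [Finset.sum_insert ha, Function.update_self, Finset.gcd_insert]
    have hrest : ∀ i ∈ s, Function.update (fun i => c i * B) a A i * f i = c i * B * f i := by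
      intro i hi
      rw [Function.update_of_ne (by rintro rfl; exact ha hi)]
    rw [Finset.sum_congr rfl hrest]
    have hgab := Int.gcd_eq_gcd_ab (f a) (s.gcd f)
    have hcoe : gcd (f a) (s.gcd f) = (Int.gcd (f a) (s.gcd f) : ℤ) := (Int.coe_gcd _ _).symm
    rw [hcoe, hgab]
    have hsum : ∑ i ∈ s, c i * B * f i = (∑ i ∈ s, c i * f i) * B := by
      rw [Finset.sum_mul]
      exact Finset.sum_congr rfl fun i _ => by ring
    rw [hsum, hc]
    ring

lemma exists_pairZ_neg_one {n : ℕ} (v : Fin n → ℤ) (h : Finset.univ.gcd v = 1) :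
    ∃ g : Fin n → ℤ, pairZ g v = -1 := by
  obtain ⟨c, hc⟩ := bezout_finset Finset.univ v
  rw [h] at hc
  refine ⟨fun i => -(c i), ?_⟩
  unfold pairZ
  have : ∑ i, -c i * v i = -∑ i, c i * v i := by
    rw [← Finset.sum_neg_distrib]
    exact Finset.sum_congr rfl fun i _ => by ring
  rw [this, hc]

lemma exists_int_scale {n : ℕ} (v : Fin n → ℚ) :
    ∃ (V : Fin n → ℤ) (D : ℕ), 0 < D ∧ ∀ i, (V i : ℚ) = (D : ℚ) * v i := by
  set D : ℕ := ∏ i, (v i).den with hD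
  have hDpos : 0 < D := Finset.prod_pos fun i _ => (v i).den_pos
  refine ⟨fun i => (v i).num * ((D : ℤ) / ((v i).den : ℤ)), D, hDpos, fun i => ?_⟩
  have hdvd : ((v i).den : ℤ) ∣ (D : ℤ) :=
    Int.natCast_dvd_natCast.mpr (Finset.dvd_prod_of_mem _ (Finset.mem_univ i))
  have hmul : ((D : ℤ) / ((v i).den : ℤ)) * ((v i).den : ℤ) = (D : ℤ) :=
    Int.ediv_mul_cancel hdvd
  have hden : (((v i).den : ℤ) : ℚ) ≠ 0 := by
    exact_mod_cast (Nat.cast_ne_zero (R := ℚ)).mpr (v i).den_nz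
  have hkey : (((D : ℤ) / ((v i).den : ℤ) : ℤ) : ℚ) = (D : ℚ) / (((v i).den : ℤ) : ℚ) := by
    rw [eq_div_iff hden]
    exact_mod_cast congrArg (Int.cast : ℤ → ℚ) hmul
  push_cast
  rw [hkey]
  conv_rhs => rw [← Rat.num_div_den (v i)]
  push_cast
  ring

open scoped Classical

section Deriv

variable (K : Type*) [Field K] {n : ℕ} (P : AddSubmonoid (Fin n → ℤ)) (e nn : Fin n → ℤ)

noncomputable def phiD (m : P) : AddMonoidAlgebra K P :=
  if h : ((m : Fin n → ℤ) + e) ∈ P then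
    pairZ (m : Fin n → ℤ) nn • (AddMonoidAlgebra.single (⟨(m : Fin n → ℤ) + e, h⟩ : P) 1 :
      AddMonoidAlgebra K P)
  else 0

noncomputable def LD : AddMonoidAlgebra K P →ₗ[K] AddMonoidAlgebra K P :=
  (Finsupp.lsum K fun m => LinearMap.toSpanSingleton K _ (phiD K P e nn m)) ∘ₗ
    (AddMonoidAlgebra.coeffLinearEquiv K).toLinearMap

lemma LD_single (m : P) (c : K) :
    LD K P e nn (AddMonoidAlgebra.single m c) = c • phiD K P e nn m := by
  have h1 : LD K P e nn (AddMonoidAlgebra.single m c)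
      = Finsupp.sum (Finsupp.single m c)
          (fun a b => b • phiD K P e nn a) := by
    rfl
  rw [h1, Finsupp.sum_single_index]
  rw [zero_smul]

lemma single_eq_smul_single (m : P) (c : K) :
    (AddMonoidAlgebra.single m c : AddMonoidAlgebra K P) = c • AddMonoidAlgebra.single m 1 := by
  rw [AddMonoidAlgebra.smul_single, smul_eq_mul, mul_one]

variable {K P e nn}

lemma phiD_pos (m : P) (h : ((m : Fin n → ℤ) + e) ∈ P) :
    phiD K P e nn m = pairZ (m : Fin n → ℤ) nn •
      (AddMonoidAlgebra.single (⟨(m : Fin n → ℤ) + e, h⟩ : P) 1 : AddMonoidAlgebra K P) := by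
  simp only [phiD]
  rw [dif_pos h]

lemma phiD_neg (m : P) (h : ¬ ((m : Fin n → ℤ) + e) ∈ P) : phiD K P e nn m = 0 := by
  simp only [phiD]
  rw [dif_neg h]

lemma phiD_zero_coeff (m : P) (h0 : pairZ (m : Fin n → ℤ) nn = 0) :
    phiD K P e nn m = 0 := by
  simp only [phiD]
  split
  · rw [h0, zero_smul]
  · rfl

lemma phiD_zero_of_not_mem
    (hP0 : ∀ m ∈ P, 0 ≤ pairZ m nn)
    (hiff : ∀ m ∈ P, ((m + e) ∈ P ↔ 1 ≤ pairZ m nn))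
    (m : P) (h : ¬ ((m : Fin n → ℤ) + e) ∈ P) : pairZ (m : Fin n → ℤ) nn = 0 := by
  have h1 : ¬ (1 ≤ pairZ (m : Fin n → ℤ) nn) := fun hle => h ((hiff _ m.2).mpr hle)
  have h2 : 0 ≤ pairZ (m : Fin n → ℤ) nn := hP0 _ m.2
  omega

theorem phiD_key
    (hP0 : ∀ m ∈ P, 0 ≤ pairZ m nn)
    (hiff : ∀ m ∈ P, ((m + e) ∈ P ↔ 1 ≤ pairZ m nn))
    (m m' : P) :
    phiD K P e nn (m + m') =
      AddMonoidAlgebra.single m (1:K) * phiD K P e nn m' + AddMonoidAlgebra.single m' (1:K) * phiD K P e nn m := by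
  have hadd : pairZ ((m + m' : P) : Fin n → ℤ) nn
      = pairZ (m : Fin n → ℤ) nn + pairZ (m' : Fin n → ℤ) nn := by
    rw [AddSubmonoid.coe_add, pairZ_add]
  by_cases h : (((m + m' : P) : Fin n → ℤ) + e) ∈ P
  · rw [phiD_pos _ h]
    have claim1 : AddMonoidAlgebra.single m (1:K) * phiD K P e nn m'
        = pairZ (m' : Fin n → ℤ) nn •
            (AddMonoidAlgebra.single (⟨((m + m' : P) : Fin n → ℤ) + e, h⟩ : P) 1 :
              AddMonoidAlgebra K P) := by
      by_cases h' : ((m' : Fin n → ℤ) + e) ∈ P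
      · rw [phiD_pos _ h', mul_smul_comm]
        have hmul : AddMonoidAlgebra.single m (1:K) *
            AddMonoidAlgebra.single (⟨(m' : Fin n → ℤ) + e, h'⟩ : P) (1:K)
            = AddMonoidAlgebra.single (m + ⟨(m' : Fin n → ℤ) + e, h'⟩ : P) ((1:K) * 1) :=
          AddMonoidAlgebra.single_mul_single ..
        rw [one_mul] at hmul
        have hpt : (m + (⟨(m' : Fin n → ℤ) + e, h'⟩ : P) : P)
            = (⟨((m + m' : P) : Fin n → ℤ) + e, h⟩ : P) := by
          apply Subtype.ext
          show (m : Fin n → ℤ) + ((m' : Fin n → ℤ) + e) = ((m + m' : P) : Fin n → ℤ) + e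
          rw [AddSubmonoid.coe_add, add_assoc]
        rw [hmul, hpt]
      · rw [phiD_neg _ h', mul_zero, phiD_zero_of_not_mem hP0 hiff m' h', zero_smul]
    have claim2 : AddMonoidAlgebra.single m' (1:K) * phiD K P e nn m
        = pairZ (m : Fin n → ℤ) nn •
            (AddMonoidAlgebra.single (⟨((m + m' : P) : Fin n → ℤ) + e, h⟩ : P) 1 :
              AddMonoidAlgebra K P) := by
      by_cases h' : ((m : Fin n → ℤ) + e) ∈ P
      · rw [phiD_pos _ h', mul_smul_comm]
        have hmul : AddMonoidAlgebra.single m' (1:K) *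
            AddMonoidAlgebra.single (⟨(m : Fin n → ℤ) + e, h'⟩ : P) (1:K)
            = AddMonoidAlgebra.single (m' + ⟨(m : Fin n → ℤ) + e, h'⟩ : P) ((1:K) * 1) :=
          AddMonoidAlgebra.single_mul_single ..
        rw [one_mul] at hmul
        have hpt : (m' + (⟨(m : Fin n → ℤ) + e, h'⟩ : P) : P)
            = (⟨((m + m' : P) : Fin n → ℤ) + e, h⟩ : P) := by
          apply Subtype.ext
          show (m' : Fin n → ℤ) + ((m : Fin n → ℤ) + e) = ((m + m' : P) : Fin n → ℤ) + e
          rw [AddSubmonoid.coe_add, ← add_assoc, add_comm (m' : Fin n → ℤ) (m : Fin n → ℤ)]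
        rw [hmul, hpt]
      · rw [phiD_neg _ h', mul_zero, phiD_zero_of_not_mem hP0 hiff m h', zero_smul]
    rw [claim1, claim2, hadd, add_smul, add_comm]
  · rw [phiD_neg _ h]
    have hsum : pairZ ((m + m' : P) : Fin n → ℤ) nn = 0 :=
      phiD_zero_of_not_mem hP0 hiff (m + m') h
    have hc0 : 0 ≤ pairZ (m : Fin n → ℤ) nn := hP0 _ m.2
    have hc0' : 0 ≤ pairZ (m' : Fin n → ℤ) nn := hP0 _ m'.2
    have hm0 : pairZ (m : Fin n → ℤ) nn = 0 := by omega
    have hm0' : pairZ (m' : Fin n → ℤ) nn = 0 := by omega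
    have hφm : phiD K P e nn m = 0 := phiD_zero_coeff m hm0
    have hφm' : phiD K P e nn m' = 0 := phiD_zero_coeff m' hm0'
    rw [hφm, hφm', mul_zero, mul_zero, add_zero]

theorem exists_derivation [CharZero K]
    (he : pairZ e nn = -1)
    (hP0 : ∀ m ∈ P, 0 ≤ pairZ m nn)
    (hiff : ∀ m ∈ P, ((m + e) ∈ P ↔ 1 ≤ pairZ m nn))
    (hex : ∃ m ∈ P, pairZ m nn ≠ 0) :
    ∃ δ : Derivation K (AddMonoidAlgebra K P) (AddMonoidAlgebra K P),
      δ ≠ 0 ∧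
      (∀ (m : P) (h : (m : Fin n → ℤ) + e ∈ P),
        δ (AddMonoidAlgebra.single m 1) =
          pairZ (m : Fin n → ℤ) nn • (AddMonoidAlgebra.single (⟨(m : Fin n → ℤ) + e, h⟩ : P) 1 :
            AddMonoidAlgebra K P)) ∧
      (∀ m : P, (m : Fin n → ℤ) + e ∉ P → δ (AddMonoidAlgebra.single m 1) = 0) ∧
      (∀ x : AddMonoidAlgebra K P, ∃ N : ℕ,
        ((δ.toLinearMap : Module.End K (AddMonoidAlgebra K P)) ^ N) x = 0) := by
  classical
  set L := LD K P e nn with hL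
  -- Leibniz rule
  have hLeib : ∀ x y : AddMonoidAlgebra K P, L (x * y) = x • L y + y • L x := by
    intro x y
    induction x using AddMonoidAlgebra.induction_linear with
    | zero => simp
    | add f g hf hg =>
      rw [add_mul, map_add, hf, hg, map_add, smul_add, add_smul]
      abel
    | single a b =>
      induction y using AddMonoidAlgebra.induction_linear with
      | zero => simp
      | add f g hf hg =>
        rw [mul_add, map_add, hf, hg, map_add, smul_add, add_smul]
        abel
      | single a' b' =>
        rw [hL, AddMonoidAlgebra.single_mul_single, LD_single, LD_single, LD_single,
          phiD_key hP0 hiff a a',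
          smul_eq_mul, smul_eq_mul, mul_smul_comm, mul_smul_comm,
          single_eq_smul_single K P a b, single_eq_smul_single K P a' b',
          smul_mul_assoc, smul_mul_assoc, smul_smul, smul_smul, smul_add,
          mul_comm b' b]
  have hone : L 1 = 0 := by
    have h1 : (1 : AddMonoidAlgebra K P) = AddMonoidAlgebra.single 0 1 := rfl
    rw [h1, hL, LD_single, one_smul]
    apply phiD_zero_coeff
    rw [ZeroMemClass.coe_zero]
    simp [pairZ]
  set δ : Derivation K (AddMonoidAlgebra K P) (AddMonoidAlgebra K P) :=
    Derivation.mk L hone hLeib with hδ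
  have hδapply : ∀ x, δ x = L x := fun x => rfl
  have hδlin : (δ.toLinearMap : Module.End K (AddMonoidAlgebra K P)) = L := rfl
  have happly : ∀ (m : P) (h : (m : Fin n → ℤ) + e ∈ P),
      δ (AddMonoidAlgebra.single m 1) =
        pairZ (m : Fin n → ℤ) nn • (AddMonoidAlgebra.single (⟨(m : Fin n → ℤ) + e, h⟩ : P) 1 :
          AddMonoidAlgebra K P) := by
    intro m h
    rw [hδapply, hL, LD_single, one_smul, phiD_pos _ h]
  have hzeroapply : ∀ m : P, (m : Fin n → ℤ) + e ∉ P → δ (AddMonoidAlgebra.single m 1) = 0 := by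
    intro m h
    rw [hδapply, hL, LD_single, one_smul, phiD_neg _ h]
  refine ⟨δ, ?_, happly, hzeroapply, ?_⟩
  · -- nonzero
    obtain ⟨m₀, hm₀P, hm₀ne⟩ := hex
    have hc1 : 1 ≤ pairZ m₀ nn := by
      have := hP0 m₀ hm₀P
      omega
    have hmem : m₀ + e ∈ P := (hiff m₀ hm₀P).mpr hc1
    intro h0
    have h1 := happly ⟨m₀, hm₀P⟩ hmem
    rw [h0] at h1
    simp only [Derivation.zero_apply] at h1
    have h2 : ((pairZ m₀ nn • (AddMonoidAlgebra.single (⟨m₀ + e, hmem⟩ : P) 1 :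
        AddMonoidAlgebra K P))).coeff (⟨m₀ + e, hmem⟩ : P) = 0 := by
      rw [← h1]
      rfl
    rw [AddMonoidAlgebra.coeff_smul, Finsupp.smul_apply, AddMonoidAlgebra.coeff_single,
        Finsupp.single_eq_same] at h2
    have h3 : pairZ m₀ nn • (1 : K) = (pairZ m₀ nn : K) := by
      rw [zsmul_eq_mul, mul_one]
    rw [h3] at h2
    exact Int.cast_ne_zero.mpr hm₀ne h2
  · -- locally nilpotent
    have hnil : ∀ (c : ℕ) (m : P), pairZ (m : Fin n → ℤ) nn < c →
        ((δ.toLinearMap : Module.End K (AddMonoidAlgebra K P)) ^ c)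
          (AddMonoidAlgebra.single m 1) = 0 := by
      intro c
      induction c with
      | zero =>
        intro m hm
        have := hP0 _ m.2
        omega
      | succ c ih =>
        intro m hm
        rw [pow_succ, Module.End.mul_apply]
        have hLs : ((δ.toLinearMap : Module.End K (AddMonoidAlgebra K P)))
            (AddMonoidAlgebra.single m 1) = phiD K P e nn m := by
          rw [hδlin, hL, LD_single, one_smul]
        rw [hLs]
        by_cases h : ((m : Fin n → ℤ) + e) ∈ P
        · rw [phiD_pos _ h, map_zsmul]
          have hlt : pairZ ((⟨(m : Fin n → ℤ) + e, h⟩ : P) : Fin n → ℤ) nn < c := by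
            show pairZ ((m : Fin n → ℤ) + e) nn < c
            rw [pairZ_add, he]
            omega
          rw [ih _ hlt, smul_zero]
        · rw [phiD_neg _ h, map_zero]
    have hmono : ∀ (N M : ℕ) (x : AddMonoidAlgebra K P), N ≤ M →
        ((δ.toLinearMap : Module.End K (AddMonoidAlgebra K P)) ^ N) x = 0 →
        ((δ.toLinearMap : Module.End K (AddMonoidAlgebra K P)) ^ M) x = 0 := by
      intro N M x hNM h
      rw [← Nat.sub_add_cancel hNM, pow_add, Module.End.mul_apply, h, map_zero]
    intro x
    induction x using AddMonoidAlgebra.induction_linear with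
    | zero => exact ⟨0, by simp⟩
    | add f g hf hg =>
      obtain ⟨N1, h1⟩ := hf
      obtain ⟨N2, h2⟩ := hg
      refine ⟨max N1 N2, ?_⟩
      rw [map_add, hmono N1 (max N1 N2) f (le_max_left _ _) h1,
        hmono N2 (max N1 N2) g (le_max_right _ _) h2, add_zero]
    | single a b =>
      refine ⟨(pairZ (a : Fin n → ℤ) nn).toNat + 1, ?_⟩
      rw [single_eq_smul_single K P a b, map_smul]
      have hlt : pairZ (a : Fin n → ℤ) nn < ((pairZ (a : Fin n → ℤ) nn).toNat + 1 : ℕ) := by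
        push_cast
        have := Int.self_le_toNat (pairZ (a : Fin n → ℤ) nn)
        omega
      rw [hnil _ a hlt, smul_zero]

end Deriv

/-- Lemma 4.1, (1) ⇒ (2): if the codimension-one face `ρ̂ = ρ⊥ ∩ σ∨` corresponding to the
extremal ray `ρ = ρ_{i₀}` of `σ` is almost saturated (contains a saturation point `w` of
`P`), then there is a Demazure root `e` for `ρ` with `(P + e) ∩ P_sat ⊆ P`; in particular
`δ_e(χ^m) = ⟨m, n_ρ⟩ χ^{m+e}` is a well-defined nonzero locally nilpotent derivation of
`K[P]`.  Here `P_sat = {m ∈ ℤⁿ | ∀ j, ⟨m, nρ j⟩ ≥ 0}` and the `nρ j` are the primitive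
generators of the pairwise distinct extremal rays of the pointed dual cone `σ`. -/
theorem stmt10 {K : Type*} [Field K] [CharZero K] {n k : ℕ}
    (P : AddSubmonoid (Fin n → ℤ)) (hfg : P.FG)
    (hgen : AddSubgroup.closure (P : Set (Fin n → ℤ)) = ⊤)
    (nρ : Fin k → (Fin n → ℤ))
    (hprim : ∀ i, Finset.univ.gcd (nρ i) = 1)
    (hpointed : ∀ x : Fin n → ℚ, x ∈ coneOf (fun i => qcast (nρ i)) →
      -x ∈ coneOf (fun i => qcast (nρ i)) → x = 0)
    (hPsat : ∀ m ∈ P, ∀ j, 0 ≤ pairZ m (nρ j))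
    (hcone : ∀ m : Fin n → ℤ, (∀ j, 0 ≤ pairZ m (nρ j)) → ∃ N : ℕ, 0 < N ∧ (N : ℤ) • m ∈ P)
    (i₀ : Fin k)
    (hdistinct : ∀ j, j ≠ i₀ → ∀ q : ℚ, qcast (nρ j) ≠ q • qcast (nρ i₀))
    (hextremal : ∀ x y : Fin n → ℚ, x ∈ coneOf (fun i => qcast (nρ i)) →
      y ∈ coneOf (fun i => qcast (nρ i)) →
      (∃ q : ℚ, 0 ≤ q ∧ x + y = q • qcast (nρ i₀)) →
      ∃ q : ℚ, 0 ≤ q ∧ x = q • qcast (nρ i₀))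
    (hface : ∃ w ∈ P, pairZ w (nρ i₀) = 0 ∧
      ∀ u : Fin n → ℤ, (∀ j, 0 ≤ pairZ (u - w) (nρ j)) → u ∈ P) :
    ∃ e : Fin n → ℤ,
      (pairZ e (nρ i₀) = -1 ∧ ∀ j, j ≠ i₀ → 0 ≤ pairZ e (nρ j)) ∧
      (∀ m ∈ P, (∀ j, 0 ≤ pairZ (m + e) (nρ j)) → m + e ∈ P) ∧
      ∃ δ : Derivation K (AddMonoidAlgebra K P) (AddMonoidAlgebra K P),
        δ ≠ 0 ∧
        (∀ (m : P) (h : (m : Fin n → ℤ) + e ∈ P),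
          δ (AddMonoidAlgebra.single m 1) =
            pairZ (m : Fin n → ℤ) (nρ i₀) • (AddMonoidAlgebra.single (⟨(m : Fin n → ℤ) + e, h⟩ : P) 1 :
              AddMonoidAlgebra K P)) ∧
        (∀ m : P, (m : Fin n → ℤ) + e ∉ P → δ (AddMonoidAlgebra.single m 1) = 0) ∧
        (∀ x : AddMonoidAlgebra K P, ∃ N : ℕ,
          ((δ.toLinearMap : Module.End K (AddMonoidAlgebra K P)) ^ N) x = 0) := by
  classical
  obtain ⟨w, hwP, hw0, hwsat⟩ := hface
  -- the ray generator is nonzero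
  have hnne : nρ i₀ ≠ 0 := by
    intro h0
    have : Finset.univ.gcd (nρ i₀) = 0 :=
      Finset.gcd_eq_zero_iff.mpr fun i _ => by rw [h0]; rfl
    rw [hprim i₀] at this
    exact one_ne_zero this
  have hqne : qcast (nρ i₀) ≠ 0 := by
    intro h0
    apply hnne
    funext i
    have := congrFun h0 i
    simpa [qcast] using this
  -- the supporting functional of the facet
  obtain ⟨v, hv0, hvpos⟩ := facet_functional nρ i₀ hqne hpointed hdistinct hextremal
  obtain ⟨V, D, hD, hVD⟩ := exists_int_scale v
  have hqV : qcast V = (D : ℚ) • v := funext fun i => by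
    simpa [qcast] using hVD i
  have hV0 : pairZ V (nρ i₀) = 0 := by
    have : ((pairZ V (nρ i₀) : ℤ) : ℚ) = 0 := by
      rw [pairZ_qcast, hqV, dotQ_smul_left, hv0, mul_zero]
    exact_mod_cast this
  have hVpos : ∀ j, j ≠ i₀ → 0 < pairZ V (nρ j) := by
    intro j hj
    have : (0 : ℚ) < ((pairZ V (nρ j) : ℤ) : ℚ) := by
      rw [pairZ_qcast, hqV, dotQ_smul_left]
      have hDq : (0:ℚ) < (D : ℚ) := by exact_mod_cast hD
      have := hvpos j hj
      positivity
    exact_mod_cast this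
  obtain ⟨g, hg⟩ := exists_pairZ_neg_one (nρ i₀) (hprim i₀)
  set N : ℤ := ∑ j, |pairZ g (nρ j)| with hN
  have hNle : ∀ j, |pairZ g (nρ j)| ≤ N :=
    fun j => Finset.single_le_sum (f := fun j => |pairZ g (nρ j)|)
      (fun i _ => abs_nonneg _) (Finset.mem_univ j)
  have hN0 : 0 ≤ N := le_trans (abs_nonneg _) (hNle i₀)
  set e : Fin n → ℤ := w + g + N • V with he
  have hpe : ∀ j, pairZ e (nρ j) = pairZ w (nρ j) + pairZ g (nρ j) + N * pairZ V (nρ j) := by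
    intro j
    rw [he, pairZ_add, pairZ_add, pairZ_smul]
  have hei₀ : pairZ e (nρ i₀) = -1 := by
    rw [hpe, hw0, hg, hV0, mul_zero]
    ring
  have hgNV : ∀ j, j ≠ i₀ → 0 ≤ pairZ g (nρ j) + N * pairZ V (nρ j) := by
    intro j hj
    have h1 : 1 ≤ pairZ V (nρ j) := hVpos j hj
    have h2 : N * 1 ≤ N * pairZ V (nρ j) := mul_le_mul_of_nonneg_left h1 hN0
    have h3 : -pairZ g (nρ j) ≤ |pairZ g (nρ j)| := neg_le_abs _
    have h4 := hNle j
    omega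
  have hej : ∀ j, j ≠ i₀ → 0 ≤ pairZ e (nρ j) := by
    intro j hj
    rw [hpe]
    have h1 := hPsat w hwP j
    have h2 := hgNV j hj
    omega
  have hsat : ∀ m ∈ P, (∀ j, 0 ≤ pairZ (m + e) (nρ j)) → m + e ∈ P := by
    intro m hm hall
    apply hwsat (m + e)
    intro j
    rw [pairZ_sub]
    by_cases hj : j = i₀
    · subst hj
      rw [hw0, sub_zero]
      exact hall _
    · have hsplit : pairZ (m + e) (nρ j) = pairZ m (nρ j) + pairZ e (nρ j) := pairZ_add _ _ _
      have h1 := hPsat m hm j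
      have h2 := hgNV j hj
      have h3 := hpe j
      omega
  have hiff : ∀ m ∈ P, ((m + e) ∈ P ↔ 1 ≤ pairZ m (nρ i₀)) := by
    intro m hm
    constructor
    · intro hmem
      have h1 := hPsat (m + e) hmem i₀
      rw [pairZ_add, hei₀] at h1
      omega
    · intro h1
      apply hsat m hm
      intro j
      rw [pairZ_add]
      by_cases hj : j = i₀
      · subst hj
        rw [hei₀]
        omega
      · have h2 := hPsat m hm j
        have h3 := hej j hj
        omega
  have hex : ∃ m ∈ P, pairZ m (nρ i₀) ≠ 0 := by
    by_contra hcon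
    push_neg at hcon
    set f : (Fin n → ℤ) →+ ℤ :=
      AddMonoidHom.mk' (fun x => pairZ x (nρ i₀)) (fun a b => pairZ_add a b (nρ i₀)) with hf
    have hle : AddSubgroup.closure (P : Set (Fin n → ℤ)) ≤ f.ker := by
      rw [AddSubgroup.closure_le]
      intro x hx
      exact hcon x hx
    rw [hgen] at hle
    have := hle (AddSubgroup.mem_top (nρ i₀))
    have hker : pairZ (nρ i₀) (nρ i₀) = 0 := this
    have := pairZ_self_pos hnne
    omega
  refine ⟨e, ⟨hei₀, hej⟩, hsat, ?_⟩
  exact exists_derivation hei₀ (fun m hm => hPsat m hm i₀) hiff hex
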